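/- L_q-error of the empirical mean absolute deviation: Let 1 = p < q ≤ 2, K ≥ 1, and let Y ∈ 𝒴_{1,q,K} with ρ := ‖Y − E Y‖_1. Let Y_1, …, Y_m be i.i.d. copies of Y, M̂_m := (1/m)·Σ_{i=1}^m Y_i and R̂_m := (1/m)·Σ_{i=1}^m |Y_i − M̂_m|. Then ‖R̂_m − ρ‖_q ≤ 2^{2/q−1}·(1+2K)·m^{−(1−1/q)}·ρ ≤ 6K·m^{−(1−1/q)}·ρ. -/

import Mathlib

open MeasureTheory ProbabilityTheory ENNReal

open scoped NNReal

noncomputable def sgnPow (r x : ℝ) : ℝ := Real.sign x * |x| ^ r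

lemma sgnPow_of_nonneg {r : ℝ} (hr : 0 < r) {x : ℝ} (hx : 0 ≤ x) :
    sgnPow r x = x ^ r := by
  rcases eq_or_lt_of_le hx with h | h
  · simp [sgnPow, ← h, Real.zero_rpow hr.ne']
  · simp [sgnPow, Real.sign_of_pos h, abs_of_pos h]

lemma sgnPow_neg (r x : ℝ) : sgnPow r (-x) = - sgnPow r x := by
  simp [sgnPow, Real.sign_neg]

lemma abs_sgnPow {r : ℝ} (hr : 0 < r) (x : ℝ) : |sgnPow r x| = |x| ^ r := by
  rcases lt_trichotomy x 0 with h | h | h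
  · simp only [sgnPow, Real.sign_of_neg h, abs_mul, abs_neg, abs_one, one_mul,
      abs_of_nonneg (Real.rpow_nonneg (abs_nonneg x) r)]
  · simp [h, sgnPow, Real.zero_rpow hr.ne']
  · simp only [sgnPow, Real.sign_of_pos h, abs_mul, abs_one, one_mul,
      abs_of_nonneg (Real.rpow_nonneg (abs_nonneg x) r)]

lemma rpow_add_rpow_le_two_rpow {r : ℝ} (hr0 : 0 < r) (hr1 : r ≤ 1) {x y : ℝ}
    (hx : 0 ≤ x) (hy : 0 ≤ y) : x ^ r + y ^ r ≤ 2 ^ (1 - r) * (x + y) ^ r := by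
  have hp : (1:ℝ) ≤ 1 / r := by
    rw [le_div_iff₀ hr0]; linarith
  lift x to ℝ≥0 using hx
  lift y to ℝ≥0 using hy
  have h := NNReal.rpow_add_le_mul_rpow_add_rpow (x ^ r) (y ^ r) hp
  rw [← NNReal.rpow_mul x, ← NNReal.rpow_mul y, mul_one_div_cancel hr0.ne', NNReal.rpow_one,
    NNReal.rpow_one] at h
  have h2 := NNReal.rpow_le_rpow h hr0.le
  rw [← NNReal.rpow_mul, one_div, inv_mul_cancel₀ hr0.ne', NNReal.rpow_one,
    NNReal.mul_rpow, ← NNReal.rpow_mul] at h2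
  have he : (r⁻¹ - 1) * r = 1 - r := by field_simp
  rw [he] at h2
  exact_mod_cast h2

lemma sgnPow_holder_nonneg {r : ℝ} (hr0 : 0 < r) (hr1 : r ≤ 1) {x y : ℝ}
    (hy : 0 ≤ y) (hxy : y ≤ x) :
    |sgnPow r x - sgnPow r y| ≤ 2 ^ (1 - r) * |x - y| ^ r := by
  have hx : 0 ≤ x := hy.trans hxy
  rw [sgnPow_of_nonneg hr0 hx, sgnPow_of_nonneg hr0 hy]
  have hmono : y ^ r ≤ x ^ r := Real.rpow_le_rpow hy hxy hr0.le
  have hsub : x ^ r ≤ (x - y) ^ r + y ^ r := by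
    have h : x ^ r = ((x - y) + y) ^ r := by ring_nf
    rw [h]
    have := NNReal.rpow_add_le_add_rpow (x - y).toNNReal y.toNNReal hr0.le hr1
    have hxy' : 0 ≤ x - y := sub_nonneg.2 hxy
    calc ((x - y) + y) ^ r = (((x - y).toNNReal + y.toNNReal : ℝ≥0) : ℝ) ^ r := by
          rw [NNReal.coe_add, Real.coe_toNNReal _ hxy', Real.coe_toNNReal _ hy]
      _ ≤ ((x-y).toNNReal ^ r + y.toNNReal ^ r : ℝ≥0) := by exact_mod_cast this
      _ = (x - y) ^ r + y ^ r := by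
          push_cast [NNReal.coe_rpow, Real.coe_toNNReal _ hxy', Real.coe_toNNReal _ hy]
          ring
  have hone : (1:ℝ) ≤ 2 ^ (1 - r) := by
    calc (1:ℝ) = 2 ^ (0:ℝ) := by norm_num
      _ ≤ 2 ^ (1 - r) := Real.rpow_le_rpow_of_exponent_le one_le_two (by linarith)
  have habs : |x - y| = x - y := abs_of_nonneg (sub_nonneg.2 hxy)
  rw [abs_of_nonneg (sub_nonneg.2 hmono), habs]
  nlinarith [Real.rpow_nonneg (sub_nonneg.2 hxy) r]

lemma sgnPow_holder_mixed {r : ℝ} (hr0 : 0 < r) (hr1 : r ≤ 1) {x y : ℝ}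
    (hx : 0 ≤ x) (hy : y ≤ 0) :
    |sgnPow r x - sgnPow r y| ≤ 2 ^ (1 - r) * |x - y| ^ r := by
  have h1 : sgnPow r y = -((-y) ^ r) := by
    rw [← sgnPow_of_nonneg hr0 (neg_nonneg.2 hy), ← neg_neg y, sgnPow_neg, neg_neg]
  rw [h1, sgnPow_of_nonneg hr0 hx, sub_neg_eq_add,
    abs_of_nonneg (add_nonneg (Real.rpow_nonneg hx r) (Real.rpow_nonneg (neg_nonneg.2 hy) r)), abs_of_nonneg (by linarith : (0:ℝ) ≤ x - y),
    show x - y = x + (-y) by ring]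
  exact rpow_add_rpow_le_two_rpow hr0 hr1 hx (neg_nonneg.2 hy)

lemma sgnPow_holder {r : ℝ} (hr0 : 0 < r) (hr1 : r ≤ 1) (x y : ℝ) :
    |sgnPow r x - sgnPow r y| ≤ 2 ^ (1 - r) * |x - y| ^ r := by
  have hneg : ∀ a b : ℝ, |sgnPow r a - sgnPow r b| ≤ 2 ^ (1 - r) * |a - b| ^ r →
      |sgnPow r (-a) - sgnPow r (-b)| ≤ 2 ^ (1 - r) * |(-a) - (-b)| ^ r := by
    intro a b h
    rw [sgnPow_neg, sgnPow_neg, show -sgnPow r a - -sgnPow r b = -(sgnPow r a - sgnPow r b) by ring,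
      abs_neg, show (-a) - (-b) = -(a - b) by ring, abs_neg]
    exact h
  rcases le_total 0 x with hx | hx <;> rcases le_total 0 y with hy | hy
  · rcases le_total y x with hxy | hxy
    · exact sgnPow_holder_nonneg hr0 hr1 hy hxy
    · rw [abs_sub_comm, abs_sub_comm x y]; exact sgnPow_holder_nonneg hr0 hr1 hx hxy
  · exact sgnPow_holder_mixed hr0 hr1 hx hy
  · rw [abs_sub_comm, abs_sub_comm x y]; exact sgnPow_holder_mixed hr0 hr1 hy hx
  · have := hneg (-x) (-y) ?_
    · simpa using this
    · rcases le_total (-y) (-x) with hxy | hxy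
      · exact sgnPow_holder_nonneg hr0 hr1 (neg_nonneg.2 hy) hxy
      · rw [abs_sub_comm (sgnPow r (-x)), abs_sub_comm (-x)]
        exact sgnPow_holder_nonneg hr0 hr1 (x := -y) (y := -x) (neg_nonneg.2 hx) hxy

lemma continuous_sgnPow {r : ℝ} (hr0 : 0 < r) (hr1 : r ≤ 1) : Continuous (sgnPow r) := by
  rw [continuous_iff_continuousAt]
  intro x
  rw [ContinuousAt, tendsto_iff_dist_tendsto_zero]
  have hc : Continuous fun t : ℝ => 2 ^ (1 - r) * |t - x| ^ r := by
    apply Continuous.mul continuous_const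
    exact (continuous_abs.comp (continuous_id.sub continuous_const)).rpow_const
      (fun _ => Or.inr hr0.le)
  have hb : Filter.Tendsto (fun t : ℝ => 2 ^ (1 - r) * |t - x| ^ r) (nhds x) (nhds 0) := by
    have := hc.tendsto x
    simpa [sub_self, Real.zero_rpow hr0.ne'] using this
  exact squeeze_zero (fun t => dist_nonneg)
    (fun t => le_trans (le_of_eq (Real.dist_eq _ _)) (sgnPow_holder hr0 hr1 t x)) hb

lemma sgnPow_zero (r : ℝ) : sgnPow r 0 = 0 := by simp [sgnPow]

lemma hasDerivAt_abs_rpow_sgnPow {q : ℝ} (hq : 1 < q) (x : ℝ) :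
    HasDerivAt (fun t => |t| ^ q) (q * sgnPow (q - 1) x) x := by
  have h := hasDerivAt_abs_rpow x hq
  convert h using 1
  rcases eq_or_ne x 0 with rfl | hx
  · simp [sgnPow_zero]
  · have h2 : |x| ^ (q - 1) = |x| ^ (q - 2) * |x| := by
      rw [show q - 1 = (q - 2) + 1 by ring, Real.rpow_add_one (abs_ne_zero.2 hx)]
    rw [sgnPow, h2]
    rcases hx.lt_or_gt with h | h
    · rw [Real.sign_of_neg h, abs_of_neg h]; ring
    · rw [Real.sign_of_pos h, abs_of_pos h]; ring

lemma abs_rpow_add_le {q : ℝ} (hq1 : 1 < q) (hq2 : q ≤ 2) (a x : ℝ) :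
    |a + x| ^ q ≤ |a| ^ q + q * sgnPow (q - 1) a * x + 2 ^ (2 - q) * |x| ^ q := by
  have hr0 : (0:ℝ) < q - 1 := by linarith
  have hr1 : q - 1 ≤ 1 := by linarith
  suffices h : ∀ a x : ℝ, 0 ≤ x →
      |a + x| ^ q ≤ |a| ^ q + q * sgnPow (q-1) a * x + 2 ^ (2-q) * |x| ^ q by
    rcases le_or_gt 0 x with hx | hx
    · exact h a x hx
    · have h2 := h (-a) (-x) (by linarith)
      have e1 : -a + -x = -(a + x) := by ring
      have e2 : q * sgnPow (q-1) (-a) * (-x) = q * sgnPow (q-1) a * x := by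
        rw [sgnPow_neg]; ring
      rwa [e1, abs_neg, abs_neg, abs_neg, e2] at h2
  clear a x
  intro a x hx
  have hq0 : (0:ℝ) < q := by linarith
  have hcont : Continuous (fun t => q * sgnPow (q-1) t) :=
    continuous_const.mul (continuous_sgnPow hr0 hr1)
  have hint : IntervalIntegrable (fun t => q * sgnPow (q-1) t) MeasureTheory.volume a (a + x) :=
    hcont.intervalIntegrable _ _
  have hftc : (∫ t in a..(a+x), q * sgnPow (q-1) t) = |a + x| ^ q - |a| ^ q :=
    intervalIntegral.integral_eq_sub_of_hasDerivAt
      (fun t _ => hasDerivAt_abs_rpow_sgnPow hq1 t) hint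
  have hD : |a + x| ^ q - |a| ^ q - q * sgnPow (q-1) a * x
      = ∫ t in a..(a+x), (q * sgnPow (q-1) t - q * sgnPow (q-1) a) := by
    rw [intervalIntegral.integral_sub hint (intervalIntegrable_const), hftc,
      intervalIntegral.integral_const]
    simp only [smul_eq_mul]
    ring
  have hab : a ≤ a + x := by linarith
  have h1 : |∫ t in a..(a+x), (q * sgnPow (q-1) t - q * sgnPow (q-1) a)|
      ≤ ∫ t in a..(a+x), |q * sgnPow (q-1) t - q * sgnPow (q-1) a| := by
    have := intervalIntegral.norm_integral_le_integral_norm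
      (f := fun t => q * sgnPow (q-1) t - q * sgnPow (q-1) a) (μ := MeasureTheory.volume) hab
    simpa [Real.norm_eq_abs] using this
  have h2 : (∫ t in a..(a+x), |q * sgnPow (q-1) t - q * sgnPow (q-1) a|)
      ≤ ∫ t in a..(a+x), q * (2 ^ (2-q) * |t - a| ^ (q-1)) := by
    apply intervalIntegral.integral_mono_on hab
      ((hcont.sub continuous_const).abs.intervalIntegrable _ _)
      ((continuous_const.mul (continuous_const.mul
        ((continuous_abs.comp (continuous_id.sub continuous_const)).rpow_const
          (fun _ => Or.inr hr0.le)))).intervalIntegrable _ _)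
    intro t _
    have hh := sgnPow_holder hr0 hr1 t a
    rw [show (1:ℝ) - (q-1) = 2 - q by ring] at hh
    calc |q * sgnPow (q-1) t - q * sgnPow (q-1) a| = q * |sgnPow (q-1) t - sgnPow (q-1) a| := by
          rw [← mul_sub, abs_mul, abs_of_pos hq0]
      _ ≤ q * (2 ^ (2-q) * |t - a| ^ (q-1)) := mul_le_mul_of_nonneg_left hh hq0.le
  have h3 : (∫ t in a..(a+x), q * (2 ^ (2-q) * |t - a| ^ (q-1)))
      = q * 2 ^ (2-q) * ∫ t in a..(a+x), |t - a| ^ (q-1) := by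
    rw [← intervalIntegral.integral_const_mul]
    apply intervalIntegral.integral_congr
    intro t _
    ring
  have h4 : (∫ t in a..(a+x), |t - a| ^ (q-1)) = x ^ q / q := by
    have h5 : (∫ t in a..(a+x), |t - a| ^ (q-1)) = ∫ t in (0:ℝ)..x, |t| ^ (q-1) := by
      have := intervalIntegral.integral_comp_sub_right (a := a) (b := a + x)
        (fun t => |t| ^ (q-1)) a
      simpa using this
    have h6 : (∫ t in (0:ℝ)..x, |t| ^ (q-1)) = ∫ t in (0:ℝ)..x, t ^ (q-1) := by
      apply intervalIntegral.integral_congr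
      intro t ht
      rw [Set.uIcc_of_le hx] at ht
      show |t| ^ (q-1) = t ^ (q-1)
      rw [abs_of_nonneg ht.1]
    rw [h5, h6, integral_rpow (Or.inl (by linarith : (-1:ℝ) < q - 1)),
      Real.zero_rpow (by linarith : q - 1 + 1 ≠ 0), show q - 1 + 1 = q by ring]
    ring
  have hfinal : |a + x| ^ q - |a| ^ q - q * sgnPow (q-1) a * x ≤ 2 ^ (2-q) * x ^ q := by
    rw [hD]
    calc (∫ t in a..(a+x), (q * sgnPow (q-1) t - q * sgnPow (q-1) a))
        ≤ |∫ t in a..(a+x), (q * sgnPow (q-1) t - q * sgnPow (q-1) a)| := le_abs_self _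
      _ ≤ q * 2 ^ (2-q) * (x ^ q / q) := by rw [← h4, ← h3]; exact h1.trans h2
      _ = 2 ^ (2-q) * x ^ q := by field_simp
  rw [abs_of_nonneg hx]
  linarith

lemma integrable_abs_rpow {Ω : Type*} [MeasurableSpace Ω] {μ : Measure Ω} {q : ℝ}
    (hq0 : 0 < q) {f : Ω → ℝ} (hf : MemLp f (ENNReal.ofReal q) μ) :
    Integrable (fun ω => |f ω| ^ q) μ := by
  have h := hf.integrable_norm_rpow (by simp [hq0]) ENNReal.ofReal_ne_top
  simpa [Real.norm_eq_abs, ENNReal.toReal_ofReal hq0.le] using h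

lemma integral_abs_rpow_add_le {Ω : Type*} [MeasurableSpace Ω] {μ : Measure Ω}
    [IsProbabilityMeasure μ] {q : ℝ} (hq1 : 1 < q) (hq2 : q ≤ 2) {U V : Ω → ℝ}
    (hU : Measurable U) (hV : Measurable V)
    (hUq : MemLp U (ENNReal.ofReal q) μ) (hVq : MemLp V (ENNReal.ofReal q) μ)
    (hind : IndepFun U V μ) (hV0 : (∫ ω, V ω ∂μ) = 0) :
    (∫ ω, |U ω + V ω| ^ q ∂μ)
      ≤ (∫ ω, |U ω| ^ q ∂μ) + 2 ^ (2-q) * ∫ ω, |V ω| ^ q ∂μ := by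
  have hq0 : (0:ℝ) < q := by linarith
  have hr0 : (0:ℝ) < q - 1 := by linarith
  have hr1 : q - 1 ≤ 1 := by linarith
  have hIUV : Integrable (fun ω => |U ω + V ω| ^ q) μ := integrable_abs_rpow hq0 (hUq.add hVq)
  have hIU : Integrable (fun ω => |U ω| ^ q) μ := integrable_abs_rpow hq0 hUq
  have hIV : Integrable (fun ω => |V ω| ^ q) μ := integrable_abs_rpow hq0 hVq
  have hone_le : (1 : ℝ≥0∞) ≤ ENNReal.ofReal q := by
    rw [← ENNReal.ofReal_one]
    exact ENNReal.ofReal_le_ofReal (by linarith)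
  have hVint : Integrable V μ := memLp_one_iff_integrable.1 (hVq.mono_exponent hone_le)
  have hGmeas : Measurable fun ω => sgnPow (q-1) (U ω) :=
    ((continuous_sgnPow hr0 hr1).measurable).comp hU
  have hGint : Integrable (fun ω => sgnPow (q-1) (U ω)) μ := by
    apply Integrable.mono ((integrable_const (1:ℝ)).add hIU) hGmeas.aestronglyMeasurable
    filter_upwards with ω
    rw [Real.norm_eq_abs, abs_sgnPow hr0]
    have hb : |U ω| ^ (q-1) ≤ 1 + |U ω| ^ q := by
      rcases le_or_gt (|U ω|) 1 with h | h
      · have h1 := Real.rpow_le_one (abs_nonneg _) h hr0.le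
        have h2 := Real.rpow_nonneg (abs_nonneg (U ω)) q
        linarith
      · have h1 := Real.rpow_le_rpow_of_exponent_le h.le (by linarith : q - 1 ≤ q)
        linarith
    calc |U ω| ^ (q-1) ≤ 1 + |U ω| ^ q := hb
      _ ≤ ‖1 + |U ω| ^ q‖ := le_abs_self _
  have hGV : IndepFun (fun ω => sgnPow (q-1) (U ω)) V μ :=
    hind.comp (continuous_sgnPow hr0 hr1).measurable measurable_id
  have hprod_int : Integrable (fun ω => sgnPow (q-1) (U ω) * V ω) μ :=
    hGV.integrable_mul hGint hVint
  have hprod0 : (∫ ω, sgnPow (q-1) (U ω) * V ω ∂μ) = 0 := by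
    have h := hGV.integral_fun_mul_eq_mul_integral hGint.aestronglyMeasurable hVint.aestronglyMeasurable
    calc (∫ ω, sgnPow (q-1) (U ω) * V ω ∂μ)
        = (∫ ω, sgnPow (q-1) (U ω) ∂μ) * ∫ ω, V ω ∂μ := h
      _ = 0 := by rw [hV0, mul_zero]
  have hRHSint : Integrable
      (fun ω => |U ω| ^ q + q * (sgnPow (q-1) (U ω) * V ω) + 2 ^ (2-q) * |V ω| ^ q) μ :=
    (hIU.add (hprod_int.const_mul q)).add (hIV.const_mul _)
  calc (∫ ω, |U ω + V ω| ^ q ∂μ)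
      ≤ ∫ ω, (|U ω| ^ q + q * (sgnPow (q-1) (U ω) * V ω) + 2 ^ (2-q) * |V ω| ^ q) ∂μ := by
        apply integral_mono hIUV hRHSint
        intro ω
        have := abs_rpow_add_le hq1 hq2 (U ω) (V ω)
        simpa [mul_assoc] using this
    _ = (∫ ω, |U ω| ^ q ∂μ) + q * (∫ ω, sgnPow (q-1) (U ω) * V ω ∂μ)
        + 2 ^ (2-q) * ∫ ω, |V ω| ^ q ∂μ := by
        have hI1 : Integrable (fun ω => |U ω| ^ q + q * (sgnPow (q-1) (U ω) * V ω)) μ :=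
          hIU.add (hprod_int.const_mul q)
        have hI2 : Integrable (fun ω => 2 ^ (2-q) * |V ω| ^ q) μ := hIV.const_mul _
        have hI3 : Integrable (fun ω => q * (sgnPow (q-1) (U ω) * V ω)) μ :=
          hprod_int.const_mul q
        rw [integral_add hI1 hI2, integral_add hIU hI3, MeasureTheory.integral_const_mul, MeasureTheory.integral_const_mul]
    _ = (∫ ω, |U ω| ^ q ∂μ) + 2 ^ (2-q) * ∫ ω, |V ω| ^ q ∂μ := by
        rw [hprod0]; ring

lemma vbe_sum {Ω : Type*} [MeasurableSpace Ω] {μ : Measure Ω} [IsProbabilityMeasure μ]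
    {q : ℝ} (hq1 : 1 < q) (hq2 : q ≤ 2) {m : ℕ} {X : Fin m → Ω → ℝ}
    (hmeas : ∀ i, Measurable (X i)) (hℒ : ∀ i, MemLp (X i) (ENNReal.ofReal q) μ)
    (h0 : ∀ i, (∫ ω, X i ω ∂μ) = 0)
    (hind : iIndepFun X μ) (s : Finset (Fin m)) :
    (∫ ω, |∑ i ∈ s, X i ω| ^ q ∂μ) ≤ 2 ^ (2-q) * ∑ i ∈ s, ∫ ω, |X i ω| ^ q ∂μ := by
  have hq0 : (0:ℝ) < q := by linarith
  induction s using Finset.cons_induction with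
  | empty => simp [Real.zero_rpow hq0.ne']
  | cons a s ha ih =>
    have hU : Measurable (fun ω => ∑ i ∈ s, X i ω) :=
      Finset.measurable_sum s (fun i _ => hmeas i)
    have hUq : MemLp (fun ω => ∑ i ∈ s, X i ω) (ENNReal.ofReal q) μ :=
      memLp_finset_sum s (fun i _ => hℒ i)
    have hindUV : IndepFun (fun ω => ∑ i ∈ s, X i ω) (X a) μ := by
      have h := hind.indepFun_finsetSum_of_notMem hmeas ha
      have e : (∑ j ∈ s, X j) = fun ω => ∑ j ∈ s, X j ω := by
        funext ω; simp [Finset.sum_apply]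
      rwa [e] at h
    have key := integral_abs_rpow_add_le hq1 hq2 hU (hmeas a) hUq (hℒ a) hindUV (h0 a)
    have e2 : ∀ ω, ∑ i ∈ Finset.cons a s ha, X i ω = (∑ i ∈ s, X i ω) + X a ω := by
      intro ω; rw [Finset.sum_cons]; ring
    simp_rw [e2, Finset.sum_cons]
    have hpos : (0:ℝ) ≤ ∫ ω, |X a ω| ^ q ∂μ :=
      integral_nonneg (fun ω => Real.rpow_nonneg (abs_nonneg _) _)
    have h1 : (1:ℝ) ≤ 2 ^ (2-q) := by
      calc (1:ℝ) = 2 ^ (0:ℝ) := by norm_num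
        _ ≤ 2 ^ (2-q) := Real.rpow_le_rpow_of_exponent_le one_le_two (by linarith)
    calc (∫ ω, |(∑ i ∈ s, X i ω) + X a ω| ^ q ∂μ)
        ≤ (∫ ω, |∑ i ∈ s, X i ω| ^ q ∂μ) + 2 ^ (2-q) * ∫ ω, |X a ω| ^ q ∂μ := key
      _ ≤ 2 ^ (2-q) * (∑ i ∈ s, ∫ ω, |X i ω| ^ q ∂μ) + 2 ^ (2-q) * ∫ ω, |X a ω| ^ q ∂μ := by
          linarith
      _ = 2 ^ (2-q) * ((∫ ω, |X a ω| ^ q ∂μ) + ∑ i ∈ s, ∫ ω, |X i ω| ^ q ∂μ) := by ring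

lemma avg_sum_eLpNorm_le {Ω : Type*} [MeasurableSpace Ω] {μ : Measure Ω} [IsProbabilityMeasure μ]
    {q : ℝ} (hq1 : 1 < q) (hq2 : q ≤ 2) {m : ℕ} (hm : 0 < m) {X : Fin m → Ω → ℝ}
    (hmeas : ∀ i, Measurable (X i)) (hℒ : ∀ i, MemLp (X i) (ENNReal.ofReal q) μ)
    (h0 : ∀ i, (∫ ω, X i ω ∂μ) = 0)
    (hind : iIndepFun X μ)
    {B : ℝ} (hB : 0 ≤ B) (hmom : ∀ i, (∫ ω, |X i ω| ^ q ∂μ) ≤ B ^ q) :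
    eLpNorm (fun ω => (m : ℝ)⁻¹ * ∑ i, X i ω) (ENNReal.ofReal q) μ
      ≤ ENNReal.ofReal (2 ^ (2/q - 1) * (m : ℝ) ^ ((1:ℝ)/q - 1) * B) := by
  have hq0 : (0:ℝ) < q := by linarith
  have hp0 : ENNReal.ofReal q ≠ 0 := by simp [hq0]
  have hptop : ENNReal.ofReal q ≠ ⊤ := ENNReal.ofReal_ne_top
  have hm0 : (0:ℝ) < (m:ℝ) := by exact_mod_cast hm
  have hSq : MemLp (fun ω => ∑ i, X i ω) (ENNReal.ofReal q) μ :=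
    memLp_finset_sum Finset.univ (fun i _ => hℒ i)
  have hvbe := vbe_sum hq1 hq2 hmeas hℒ h0 hind Finset.univ
  have hsum_le : (∑ i, ∫ ω, |X i ω| ^ q ∂μ) ≤ (m:ℝ) * B ^ q := by
    calc (∑ i, ∫ ω, |X i ω| ^ q ∂μ) ≤ ∑ _i : Fin m, B ^ q :=
          Finset.sum_le_sum (fun i _ => hmom i)
      _ = (m:ℝ) * B ^ q := by simp [Finset.sum_const, nsmul_eq_mul]
  have hSbound : eLpNorm (fun ω => ∑ i, X i ω) (ENNReal.ofReal q) μ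
      ≤ ENNReal.ofReal (2 ^ ((2-q) * q⁻¹) * ((m:ℝ) ^ q⁻¹ * B)) := by
    rw [hSq.eLpNorm_eq_integral_rpow_norm hp0 hptop]
    apply ENNReal.ofReal_le_ofReal
    simp only [Real.norm_eq_abs, ENNReal.toReal_ofReal hq0.le]
    have hIpos : (0:ℝ) ≤ ∫ ω, |∑ i, X i ω| ^ q ∂μ :=
      integral_nonneg (fun ω => Real.rpow_nonneg (abs_nonneg _) _)
    have h2 : (∫ ω, |∑ i, X i ω| ^ q ∂μ) ≤ 2 ^ (2-q) * ((m:ℝ) * B ^ q) := by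
      calc (∫ ω, |∑ i, X i ω| ^ q ∂μ) ≤ 2 ^ (2-q) * ∑ i, ∫ ω, |X i ω| ^ q ∂μ := hvbe
        _ ≤ 2 ^ (2-q) * ((m:ℝ) * B ^ q) := by
            apply mul_le_mul_of_nonneg_left hsum_le (Real.rpow_nonneg (by norm_num) _)
    calc (∫ ω, |∑ i, X i ω| ^ q ∂μ) ^ q⁻¹ ≤ (2 ^ (2-q) * ((m:ℝ) * B ^ q)) ^ q⁻¹ :=
          Real.rpow_le_rpow hIpos h2 (by positivity)
      _ = 2 ^ ((2-q) * q⁻¹) * ((m:ℝ) ^ q⁻¹ * B) := by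
          rw [Real.mul_rpow (Real.rpow_nonneg (by norm_num) _) (by positivity),
            Real.mul_rpow hm0.le (Real.rpow_nonneg hB _),
            ← Real.rpow_mul (by norm_num : (0:ℝ) ≤ 2),
            ← Real.rpow_mul hB, mul_inv_cancel₀ hq0.ne', Real.rpow_one]
  have e : (fun ω => (m : ℝ)⁻¹ * ∑ i, X i ω) = (m:ℝ)⁻¹ • (fun ω => ∑ i, X i ω) := by
    funext ω; simp [smul_eq_mul]
  calc eLpNorm (fun ω => (m : ℝ)⁻¹ * ∑ i, X i ω) (ENNReal.ofReal q) μ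
      = ‖(m:ℝ)⁻¹‖ₑ * eLpNorm (fun ω => ∑ i, X i ω) (ENNReal.ofReal q) μ := by
        rw [e, eLpNorm_const_smul]
    _ = ENNReal.ofReal ((m:ℝ)⁻¹) * eLpNorm (fun ω => ∑ i, X i ω) (ENNReal.ofReal q) μ := by
        rw [Real.enorm_eq_ofReal (by positivity)]
    _ ≤ ENNReal.ofReal ((m:ℝ)⁻¹) * ENNReal.ofReal (2 ^ ((2-q) * q⁻¹) * ((m:ℝ) ^ q⁻¹ * B)) :=
        mul_le_mul_right hSbound _
    _ = ENNReal.ofReal ((m:ℝ)⁻¹ * (2 ^ ((2-q) * q⁻¹) * ((m:ℝ) ^ q⁻¹ * B))) :=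
        (ENNReal.ofReal_mul (by positivity)).symm
    _ = ENNReal.ofReal (2 ^ (2/q - 1) * (m : ℝ) ^ ((1:ℝ)/q - 1) * B) := by
        congr 1
        have e1 : (2-q) * q⁻¹ = 2/q - 1 := by field_simp
        have e2 : (m : ℝ) ^ ((1:ℝ)/q - 1) = (m:ℝ) ^ ((1:ℝ)/q) * (m:ℝ)⁻¹ := by
          rw [Real.rpow_sub hm0, Real.rpow_one, div_eq_mul_inv]
        rw [e1, e2, one_div]
        ring

lemma integral_rpow_le_of_eLpNorm_le {Ω : Type*} [MeasurableSpace Ω] {μ : Measure Ω}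
    {q : ℝ} (hq0 : 0 < q) {f : Ω → ℝ} (hf : MemLp f (ENNReal.ofReal q) μ)
    {B : ℝ} (hB : 0 ≤ B) (h : eLpNorm f (ENNReal.ofReal q) μ ≤ ENNReal.ofReal B) :
    (∫ ω, |f ω| ^ q ∂μ) ≤ B ^ q := by
  have hp0 : ENNReal.ofReal q ≠ 0 := by simp [hq0]
  rw [hf.eLpNorm_eq_integral_rpow_norm hp0 ENNReal.ofReal_ne_top] at h
  simp only [Real.norm_eq_abs, ENNReal.toReal_ofReal hq0.le] at h
  have hIpos : (0:ℝ) ≤ ∫ ω, |f ω| ^ q ∂μ :=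
    integral_nonneg (fun ω => Real.rpow_nonneg (abs_nonneg _) _)
  have h2 : (∫ ω, |f ω| ^ q ∂μ) ^ q⁻¹ ≤ B := (ENNReal.ofReal_le_ofReal_iff hB).1 h
  have h3 := Real.rpow_le_rpow (Real.rpow_nonneg hIpos _) h2 hq0.le
  rwa [← Real.rpow_mul hIpos, inv_mul_cancel₀ hq0.ne', Real.rpow_one] at h3

/-- **`L_q`-error of the empirical mean absolute deviation** (Lemma 2.8 (a)):
let `1 = p < q ≤ 2`, `K ≥ 1`, and `Y ∈ 𝒴_{1,q,K}` with `ρ = ‖Y - E Y‖_1`.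
For i.i.d. copies `Y_1, …, Y_m` of `Y`, `M̂_m = (1/m) ∑ Y_i` and
`R̂_m = (1/m) ∑ |Y_i - M̂_m|`, one has
`‖R̂_m - ρ‖_q ≤ 2^(2/q-1) * (1+2K) * m^(-(1-1/q)) * ρ ≤ 6K * m^(-(1-1/q)) * ρ`. -/
theorem empirical_mad_error
    {Ω : Type*} [MeasurableSpace Ω] (μ : Measure Ω) [IsProbabilityMeasure μ]
    (q : ℝ) (hq1 : 1 < q) (hq2 : q ≤ 2) (K : ℝ) (hK : 1 ≤ K)
    (Y : Ω → ℝ) (hYmeas : Measurable Y) (hYq : MemLp Y (ENNReal.ofReal q) μ)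
    (hcone : eLpNorm (fun ω => Y ω - ∫ ω', Y ω' ∂μ) (ENNReal.ofReal q) μ
      ≤ ENNReal.ofReal K * eLpNorm (fun ω => Y ω - ∫ ω', Y ω' ∂μ) 1 μ)
    (m : ℕ) (hm : 0 < m) (Ys : Fin m → Ω → ℝ) (hmeas : ∀ i, Measurable (Ys i))
    (hindep : iIndepFun Ys μ)
    (hid : ∀ i, IdentDistrib (Ys i) Y μ μ) :
    eLpNorm (fun ω => (m : ℝ)⁻¹ * (∑ i, |Ys i ω - (m : ℝ)⁻¹ * ∑ j, Ys j ω|)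
          - (eLpNorm (fun ω' => Y ω' - ∫ ω'', Y ω'' ∂μ) 1 μ).toReal)
        (ENNReal.ofReal q) μ
      ≤ ENNReal.ofReal ((2 : ℝ) ^ (2 / q - 1) * (1 + 2 * K) * (m : ℝ) ^ (-(1 - 1 / q))
          * (eLpNorm (fun ω' => Y ω' - ∫ ω'', Y ω'' ∂μ) 1 μ).toReal) ∧
    ENNReal.ofReal ((2 : ℝ) ^ (2 / q - 1) * (1 + 2 * K) * (m : ℝ) ^ (-(1 - 1 / q))
          * (eLpNorm (fun ω' => Y ω' - ∫ ω'', Y ω'' ∂μ) 1 μ).toReal)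
      ≤ ENNReal.ofReal (6 * K * (m : ℝ) ^ (-(1 - 1 / q))
          * (eLpNorm (fun ω' => Y ω' - ∫ ω'', Y ω'' ∂μ) 1 μ).toReal) := by
  have hq0 : (0:ℝ) < q := by linarith
  have hK0 : (0:ℝ) ≤ K := by linarith
  have hp0 : ENNReal.ofReal q ≠ 0 := by simp [hq0]
  have hptop : ENNReal.ofReal q ≠ ⊤ := ENNReal.ofReal_ne_top
  have hone_le : (1:ℝ≥0∞) ≤ ENNReal.ofReal q := by
    rw [← ENNReal.ofReal_one]; exact ENNReal.ofReal_le_ofReal (by linarith)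
  have hm0 : (0:ℝ) < (m:ℝ) := by exact_mod_cast hm
  set c : ℝ := ∫ ω', Y ω' ∂μ with hc
  have hYc : MemLp (fun ω => Y ω - c) (ENNReal.ofReal q) μ := hYq.sub (memLp_const c)
  have hYc1 : MemLp (fun ω => Y ω - c) 1 μ := hYc.mono_exponent hone_le
  have hfint : Integrable (fun ω => Y ω - c) μ := memLp_one_iff_integrable.1 hYc1
  set ρ : ℝ := (eLpNorm (fun ω' => Y ω' - c) 1 μ).toReal with hρ
  have hρ0 : 0 ≤ ρ := ENNReal.toReal_nonneg
  have hf1top : eLpNorm (fun ω' => Y ω' - c) 1 μ ≠ ⊤ := hYc1.eLpNorm_ne_top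
  have hofρ : ENNReal.ofReal ρ = eLpNorm (fun ω' => Y ω' - c) 1 μ := ENNReal.ofReal_toReal hf1top
  have hρeq : ρ = ∫ ω, |Y ω - c| ∂μ := by
    rw [hρ, eLpNorm_one_eq_lintegral_enorm,
      ← integral_norm_eq_lintegral_enorm hfint.aestronglyMeasurable]
    simp only [Real.norm_eq_abs]
  have hcone' : eLpNorm (fun ω => Y ω - c) (ENNReal.ofReal q) μ ≤ ENNReal.ofReal (K * ρ) := by
    rw [ENNReal.ofReal_mul hK0, hofρ]; exact hcone
  have hIq : (∫ ω, |Y ω - c| ^ q ∂μ) ≤ (K * ρ) ^ q :=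
    integral_rpow_le_of_eLpNorm_le hq0 hYc (by positivity) hcone'
  -- the centered copies
  have hXmeas : ∀ i, Measurable (fun ω => Ys i ω - c) := fun i => (hmeas i).sub measurable_const
  have hsub_meas : Measurable (fun x : ℝ => x - c) := measurable_id.sub measurable_const
  have hidX : ∀ i, IdentDistrib (fun ω => Ys i ω - c) (fun ω => Y ω - c) μ μ :=
    fun i => (hid i).comp hsub_meas
  have hXq : ∀ i, MemLp (fun ω => Ys i ω - c) (ENNReal.ofReal q) μ :=
    fun i => (hidX i).symm.memLp_snd hYc
  have hYint : Integrable Y μ := memLp_one_iff_integrable.1 (hYq.mono_exponent hone_le)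
  have hfmean : (∫ ω, (Y ω - c) ∂μ) = 0 := by
    rw [integral_sub hYint (integrable_const c), integral_const]
    simp [hc]
  have hX0 : ∀ i, (∫ ω, (Ys i ω - c) ∂μ) = 0 := fun i => ((hidX i).integral_eq).trans hfmean
  have hXind : iIndepFun (fun i => fun ω => Ys i ω - c) μ :=
    hindep.comp (fun _ => fun x => x - c) (fun _ => hsub_meas)
  have habsq_meas : Measurable (fun x : ℝ => |x - c| ^ q) :=
    (((continuous_id.sub continuous_const).abs).rpow_const (fun _ => Or.inr hq0.le)).measurable
  have hXmom : ∀ i, (∫ ω, |Ys i ω - c| ^ q ∂μ) ≤ (K * ρ) ^ q := by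
    intro i
    have h := ((hid i).comp habsq_meas).integral_eq
    calc (∫ ω, |Ys i ω - c| ^ q ∂μ) = ∫ ω, |Y ω - c| ^ q ∂μ := h
      _ ≤ (K * ρ) ^ q := hIq
  have hA1 := avg_sum_eLpNorm_le hq1 hq2 hm hXmeas hXq hX0 hXind (by positivity) hXmom
  -- the deviation copies
  have hζmeas : Measurable (fun x : ℝ => |x - c| - ρ) :=
    ((measurable_id.sub measurable_const).abs).sub measurable_const
  have hZmeas : ∀ i, Measurable (fun ω => |Ys i ω - c| - ρ) :=
    fun i => (((hmeas i).sub measurable_const).abs).sub measurable_const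
  have hgq : MemLp (fun ω => |Y ω - c| - ρ) (ENNReal.ofReal q) μ := by
    have h1 : MemLp (fun ω => |Y ω - c|) (ENNReal.ofReal q) μ := by
      have := hYc.norm; simpa [Real.norm_eq_abs] using this
    exact h1.sub (memLp_const ρ)
  have hidZ : ∀ i, IdentDistrib (fun ω => |Ys i ω - c| - ρ) (fun ω => |Y ω - c| - ρ) μ μ :=
    fun i => (hid i).comp hζmeas
  have hZq : ∀ i, MemLp (fun ω => |Ys i ω - c| - ρ) (ENNReal.ofReal q) μ :=
    fun i => (hidZ i).symm.memLp_snd hgq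
  have hgmean : (∫ ω, (|Y ω - c| - ρ) ∂μ) = 0 := by
    rw [integral_sub hfint.abs (integrable_const ρ), integral_const]
    simp [← hρeq]
  have hZ0 : ∀ i, (∫ ω, (|Ys i ω - c| - ρ) ∂μ) = 0 :=
    fun i => ((hidZ i).integral_eq).trans hgmean
  have hZind : iIndepFun (fun i => fun ω => |Ys i ω - c| - ρ) μ :=
    hindep.comp (fun _ => fun x => |x - c| - ρ) (fun _ => hζmeas)
  have hg_eLp : eLpNorm (fun ω => |Y ω - c| - ρ) (ENNReal.ofReal q) μ
      ≤ ENNReal.ofReal ((1 + K) * ρ) := by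
    have h1 : AEStronglyMeasurable (fun ω => |Y ω - c|) μ :=
      (((hYmeas.sub measurable_const).abs)).aestronglyMeasurable
    have h2 : AEStronglyMeasurable (fun _ : Ω => ρ) μ := aestronglyMeasurable_const
    calc eLpNorm (fun ω => |Y ω - c| - ρ) (ENNReal.ofReal q) μ
        ≤ eLpNorm (fun ω => |Y ω - c|) (ENNReal.ofReal q) μ
          + eLpNorm (fun _ : Ω => ρ) (ENNReal.ofReal q) μ := eLpNorm_sub_le h1 h2 hone_le
      _ = eLpNorm (fun ω => Y ω - c) (ENNReal.ofReal q) μ + ENNReal.ofReal ρ := by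
          rw [show (fun ω => |Y ω - c|) = fun ω => ‖Y ω - c‖ from rfl, eLpNorm_norm]
          congr 1
          rw [eLpNorm_const ρ hp0 (NeZero.ne μ)]
          simp [measure_univ, Real.enorm_eq_ofReal hρ0]
      _ ≤ ENNReal.ofReal (K * ρ) + ENNReal.ofReal ρ := add_le_add_left hcone' _
      _ = ENNReal.ofReal ((1 + K) * ρ) := by
          rw [← ENNReal.ofReal_add (by positivity) hρ0]
          ring_nf
  have hgmom_base : (∫ ω, |(|Y ω - c| - ρ)| ^ q ∂μ) ≤ ((1 + K) * ρ) ^ q :=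
    integral_rpow_le_of_eLpNorm_le hq0 hgq (by positivity) hg_eLp
  have hζq_meas : Measurable (fun x : ℝ => |(|x - c| - ρ)| ^ q) :=
    ((((continuous_id.sub continuous_const).abs.sub continuous_const).abs).rpow_const
      (fun _ => Or.inr hq0.le)).measurable
  have hZmom : ∀ i, (∫ ω, |(|Ys i ω - c| - ρ)| ^ q ∂μ) ≤ ((1 + K) * ρ) ^ q := by
    intro i
    have h := ((hid i).comp hζq_meas).integral_eq
    calc (∫ ω, |(|Ys i ω - c| - ρ)| ^ q ∂μ) = ∫ ω, |(|Y ω - c| - ρ)| ^ q ∂μ := h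
      _ ≤ ((1 + K) * ρ) ^ q := hgmom_base
  have hA2 := avg_sum_eLpNorm_le hq1 hq2 hm hZmeas hZq hZ0 hZind (by positivity) hZmom
  -- decomposition
  have hTeq : (fun ω => (m : ℝ)⁻¹ * (∑ i, |Ys i ω - (m : ℝ)⁻¹ * ∑ j, Ys j ω|) - ρ)
      = (fun ω => (m:ℝ)⁻¹ * ∑ i, (|Ys i ω - (m:ℝ)⁻¹ * ∑ j, Ys j ω| - |Ys i ω - c|))
        + (fun ω => (m:ℝ)⁻¹ * ∑ i, (|Ys i ω - c| - ρ)) := by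
    funext ω
    simp only [Pi.add_apply]
    rw [← mul_add, ← Finset.sum_add_distrib]
    have h1 : ∀ i, (|Ys i ω - (m:ℝ)⁻¹ * ∑ j, Ys j ω| - |Ys i ω - c|) + (|Ys i ω - c| - ρ)
        = |Ys i ω - (m:ℝ)⁻¹ * ∑ j, Ys j ω| - ρ := fun i => by ring
    rw [Finset.sum_congr rfl (fun i _ => h1 i), Finset.sum_sub_distrib, Finset.sum_const,
      Finset.card_univ, Fintype.card_fin, nsmul_eq_mul, mul_sub]
    rw [show (m:ℝ)⁻¹ * ((m:ℝ) * ρ) = ρ by field_simp]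
  have hAmeas : Measurable (fun ω => (m:ℝ)⁻¹ *
      ∑ i, (|Ys i ω - (m:ℝ)⁻¹ * ∑ j, Ys j ω| - |Ys i ω - c|)) := by
    apply Measurable.const_mul
    apply Finset.measurable_sum
    intro i _
    apply Measurable.sub
    · exact ((hmeas i).sub ((Finset.measurable_sum Finset.univ
        (fun j _ => hmeas j)).const_mul _)).abs
    · exact ((hmeas i).sub measurable_const).abs
  have hBmeas : Measurable (fun ω => (m:ℝ)⁻¹ * ∑ i, (|Ys i ω - c| - ρ)) := by
    apply Measurable.const_mul
    exact Finset.measurable_sum Finset.univ (fun i _ => hZmeas i)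
  -- pointwise domination of the first piece
  have hAbound : eLpNorm (fun ω => (m:ℝ)⁻¹ *
        ∑ i, (|Ys i ω - (m:ℝ)⁻¹ * ∑ j, Ys j ω| - |Ys i ω - c|)) (ENNReal.ofReal q) μ
      ≤ eLpNorm (fun ω => (m:ℝ)⁻¹ * ∑ i, (Ys i ω - c)) (ENNReal.ofReal q) μ := by
    apply eLpNorm_mono
    intro ω
    simp only [Real.norm_eq_abs]
    have hMc : (m:ℝ)⁻¹ * ∑ i, (Ys i ω - c) = ((m:ℝ)⁻¹ * ∑ j, Ys j ω) - c := by
      rw [Finset.sum_sub_distrib, Finset.sum_const, Finset.card_univ, Fintype.card_fin,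
        nsmul_eq_mul, mul_sub, show (m:ℝ)⁻¹ * ((m:ℝ) * c) = c by field_simp]
    rw [hMc]
    have hdi : ∀ i, |(|Ys i ω - (m:ℝ)⁻¹ * ∑ j, Ys j ω| - |Ys i ω - c|)|
        ≤ |((m:ℝ)⁻¹ * ∑ j, Ys j ω) - c| := by
      intro i
      calc |(|Ys i ω - (m:ℝ)⁻¹ * ∑ j, Ys j ω| - |Ys i ω - c|)|
          ≤ |(Ys i ω - (m:ℝ)⁻¹ * ∑ j, Ys j ω) - (Ys i ω - c)| :=
            abs_abs_sub_abs_le_abs_sub _ _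
        _ = |((m:ℝ)⁻¹ * ∑ j, Ys j ω) - c| := by
            rw [show (Ys i ω - (m:ℝ)⁻¹ * ∑ j, Ys j ω) - (Ys i ω - c)
              = -(((m:ℝ)⁻¹ * ∑ j, Ys j ω) - c) by ring, abs_neg]
    calc |(m:ℝ)⁻¹ * ∑ i, (|Ys i ω - (m:ℝ)⁻¹ * ∑ j, Ys j ω| - |Ys i ω - c|)|
        = (m:ℝ)⁻¹ * |∑ i, (|Ys i ω - (m:ℝ)⁻¹ * ∑ j, Ys j ω| - |Ys i ω - c|)| := by
          rw [abs_mul, abs_of_nonneg (by positivity : (0:ℝ) ≤ (m:ℝ)⁻¹)]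
      _ ≤ (m:ℝ)⁻¹ * ∑ i, |(|Ys i ω - (m:ℝ)⁻¹ * ∑ j, Ys j ω| - |Ys i ω - c|)| := by
          apply mul_le_mul_of_nonneg_left (Finset.abs_sum_le_sum_abs _ _) (by positivity)
      _ ≤ (m:ℝ)⁻¹ * ∑ _i : Fin m, |((m:ℝ)⁻¹ * ∑ j, Ys j ω) - c| := by
          apply mul_le_mul_of_nonneg_left (Finset.sum_le_sum (fun i _ => hdi i)) (by positivity)
      _ = |((m:ℝ)⁻¹ * ∑ j, Ys j ω) - c| := by
          rw [Finset.sum_const, Finset.card_univ, Fintype.card_fin, nsmul_eq_mul]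
          field_simp
  constructor
  · calc eLpNorm (fun ω => (m : ℝ)⁻¹ * (∑ i, |Ys i ω - (m : ℝ)⁻¹ * ∑ j, Ys j ω|) - ρ)
          (ENNReal.ofReal q) μ
        ≤ eLpNorm (fun ω => (m:ℝ)⁻¹ *
              ∑ i, (|Ys i ω - (m:ℝ)⁻¹ * ∑ j, Ys j ω| - |Ys i ω - c|)) (ENNReal.ofReal q) μ
          + eLpNorm (fun ω => (m:ℝ)⁻¹ * ∑ i, (|Ys i ω - c| - ρ)) (ENNReal.ofReal q) μ := by
          rw [hTeq]
          exact eLpNorm_add_le hAmeas.aestronglyMeasurable hBmeas.aestronglyMeasurable hone_le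
      _ ≤ ENNReal.ofReal (2 ^ (2/q - 1) * (m : ℝ) ^ ((1:ℝ)/q - 1) * (K * ρ))
          + ENNReal.ofReal (2 ^ (2/q - 1) * (m : ℝ) ^ ((1:ℝ)/q - 1) * ((1 + K) * ρ)) :=
          add_le_add (hAbound.trans hA1) hA2
      _ = ENNReal.ofReal ((2 : ℝ) ^ (2 / q - 1) * (1 + 2 * K) * (m : ℝ) ^ (-(1 - 1 / q)) * ρ) := by
          rw [← ENNReal.ofReal_add (by positivity) (by positivity)]
          congr 1
          rw [show -(1 - 1/q) = (1:ℝ)/q - 1 by ring]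
          ring
  · apply ENNReal.ofReal_le_ofReal
    have h2 : (2:ℝ) ^ (2/q - 1) ≤ 2 := by
      calc (2:ℝ) ^ (2/q - 1) ≤ 2 ^ (1:ℝ) :=
            Real.rpow_le_rpow_of_exponent_le one_le_two
              (by rw [sub_le_iff_le_add, div_le_iff₀ hq0]; nlinarith)
        _ = 2 := Real.rpow_one 2
    have hconst : (2:ℝ) ^ (2/q - 1) * (1 + 2*K) ≤ 6 * K := by nlinarith [Real.rpow_nonneg (by norm_num : (0:ℝ) ≤ 2) (2/q - 1)]
    have ht : (0:ℝ) ≤ (m : ℝ) ^ (-(1 - 1/q)) * ρ := by positivity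
    calc (2 : ℝ) ^ (2 / q - 1) * (1 + 2 * K) * (m : ℝ) ^ (-(1 - 1 / q)) * ρ
        = ((2 : ℝ) ^ (2 / q - 1) * (1 + 2 * K)) * ((m : ℝ) ^ (-(1 - 1 / q)) * ρ) := by ring
      _ ≤ (6 * K) * ((m : ℝ) ^ (-(1 - 1 / q)) * ρ) := mul_le_mul_of_nonneg_right hconst ht
      _ = 6 * K * (m : ℝ) ^ (-(1 - 1 / q)) * ρ := by ring
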